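/- For every p ∈ (0,1) and q ∈ (0,1) with p > q, one has f11(p) > f12(p,q), where f11(p) = log p + p(1-p) - log(1 - p + p·exp(p(1-p))) and f12(p,q) = log q + p²q(1-q) - log(1 - q + q·exp(p²q(1-q))); consequently exp(f11(p)) > exp(f12(p,q)). -/

import Mathlib

noncomputable def f11 (p : ℝ) : ℝ :=
  Real.log p + p * (1 - p) - Real.log (1 - p + p * Real.exp (p * (1 - p)))

noncomputable def f12 (p q : ℝ) : ℝ :=
  Real.log q + p ^ 2 * q * (1 - q) - Real.log (1 - q + q * Real.exp (p ^ 2 * q * (1 - q)))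

lemma u_deriv (x : ℝ) (hx : x ∈ Set.Ioo (0:ℝ) 1) :
    HasDerivAt (fun x : ℝ => Real.log (1-x) - Real.log x - x + x^2)
      (-(1-x)⁻¹ - x⁻¹ - 1 + 2*x) x := by
  obtain ⟨h0, h1⟩ := hx
  have h1x : (1:ℝ) - x ≠ 0 := by linarith
  have hl1 : HasDerivAt (fun x : ℝ => Real.log (1-x)) (-(1-x)⁻¹) x := by
    have := (Real.hasDerivAt_log h1x).comp x
      ((hasDerivAt_const x (1:ℝ)).sub (hasDerivAt_id x))
    simpa [Function.comp_def] using this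
  have hl2 : HasDerivAt Real.log x⁻¹ x := Real.hasDerivAt_log (ne_of_gt h0)
  have := ((hl1.sub hl2).sub (hasDerivAt_id x)).add (hasDerivAt_pow 2 x)
  exact this.congr_deriv (by norm_num)

lemma u_anti : StrictAntiOn (fun x : ℝ => Real.log (1-x) - Real.log x - x + x^2)
    (Set.Ioo 0 1) := by
  apply strictAntiOn_of_deriv_neg (convex_Ioo 0 1)
  · exact fun x hx => (u_deriv x hx).continuousAt.continuousWithinAt
  · intro x hx
    rw [interior_Ioo] at hx
    rw [(u_deriv x hx).deriv]
    obtain ⟨h0, h1⟩ := hx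
    have hx1 : (0:ℝ) < 1 - x := by linarith
    have e1 : (0:ℝ) < (1-x)⁻¹ := inv_pos.mpr hx1
    have e2 : (1:ℝ) < x⁻¹ := by
      rw [show (1:ℝ) = x * x⁻¹ by field_simp]
      nlinarith [inv_pos.mpr h0]
    linarith

theorem f11_gt_f12 (p q : ℝ) (hp : p ∈ Set.Ioo (0 : ℝ) 1) (hq : q ∈ Set.Ioo (0 : ℝ) 1)
    (hpq : p > q) :
    f11 p > f12 p q ∧ Real.exp (f11 p) > Real.exp (f12 p q) := by
  obtain ⟨hp0, hp1⟩ := hp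
  obtain ⟨hq0, hq1⟩ := hq
  have hp1' : (0:ℝ) < 1 - p := by linarith
  have hq1' : (0:ℝ) < 1 - q := by linarith
  set a := p * (1 - p) with ha
  set b := p ^ 2 * q * (1 - q) with hb
  have haa : a = p - p^2 := by rw [ha]; ring
  have hb_lt : b < q - q^2 := by
    rw [hb]
    have hps : (0:ℝ) < 1 - p^2 := by nlinarith
    nlinarith [mul_pos (mul_pos hq0 hq1') hps]
  have key : Real.log q + Real.log (1-p) + b < Real.log p + Real.log (1-q) + a := by
    have hu := u_anti (Set.mem_Ioo.mpr ⟨hq0, hq1⟩) (Set.mem_Ioo.mpr ⟨hp0, hp1⟩) hpq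
    simp only at hu
    linarith
  have hea : (0:ℝ) < Real.exp a := Real.exp_pos _
  have heb : (0:ℝ) < Real.exp b := Real.exp_pos _
  have hD1 : (0:ℝ) < 1 - p + p * Real.exp a := by nlinarith
  have hD2 : (0:ℝ) < 1 - q + q * Real.exp b := by nlinarith
  have step : q * (1-p) * Real.exp b < p * (1-q) * Real.exp a := by
    have h := Real.exp_lt_exp.mpr key
    rwa [Real.exp_add, Real.exp_add, Real.exp_add, Real.exp_add, Real.exp_log hq0,
      Real.exp_log hp0, Real.exp_log hp1', Real.exp_log hq1'] at h
  have main : q * Real.exp b * (1 - p + p * Real.exp a)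
      < p * Real.exp a * (1 - q + q * Real.exp b) := by nlinarith [step]
  have hlog := Real.log_lt_log (by positivity) main
  rw [Real.log_mul (by positivity) (ne_of_gt hD1),
      Real.log_mul (by positivity) (ne_of_gt hD2),
      Real.log_mul (ne_of_gt hq0) (ne_of_gt heb),
      Real.log_mul (ne_of_gt hp0) (ne_of_gt hea),
      Real.log_exp, Real.log_exp] at hlog
  have h1 : f11 p > f12 p q := by
    simp only [f11, f12, ← ha, ← hb]
    linarith
  exact ⟨h1, Real.exp_lt_exp.mpr h1⟩
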